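/- Let p ∈ ℝ satisfy p⁵ = −45. Define, for τ ∈ (−1,∞): G₂(τ) = −(1/30)·p³·(1+τ)^(−2/5), G₄(τ) = (3/20)·p·(1+τ)^(−4/5), G₅(τ) = (1/5)·(1+τ)^(−1), G₇(τ) = −(1/50)·p³·(1+τ)^(−7/5). Then for every τ ∈ (−1,∞) the following derivative identities hold: G₂'(τ) = G₂(τ)G₅(τ) − G₇(τ); G₄'(τ) = 2(G₂(τ)G₇(τ) − G₄(τ)G₅(τ)); G₅'(τ) = G₅(τ)² + 14G₂(τ)⁵ − 28G₂(τ)³G₄(τ) − 18G₂(τ)G₄(τ)²; G₇'(τ) = −G₅(τ)G₇(τ) + 21G₂(τ)⁶ + 35G₂(τ)⁴G₄(τ) − 21G₂(τ)²G₄(τ)² − 3G₄(τ)³. That is, (G₂,G₄,G₅,G₇) is a solution of the dynamical system (II) with parameters y₄ = y₆ = y₈ = y₁₀ = 0. -/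

import Mathlib

/- Context: for real τ > −1 and real exponent a, `(1+τ) ^ a` denotes the real power
(`Real.rpow`).  The dynamical system (II) with parameters y₄ = y₆ = y₈ = y₁₀ = 0 is
G₂' = G₂G₅ − G₇, G₄' = 2(G₂G₇ − G₄G₅), G₅' = G₅² + 14G₂⁵ − 28G₂³G₄ − 18G₂G₄²,
G₇' = −G₅G₇ + 21G₂⁶ + 35G₂⁴G₄ − 21G₂²G₄² − 3G₄³. -/

noncomputable section

def G2 (p τ : ℝ) : ℝ := -(1 / 30) * p ^ 3 * (1 + τ) ^ (-(2 : ℝ) / 5)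
def G4 (p τ : ℝ) : ℝ := (3 / 20) * p * (1 + τ) ^ (-(4 : ℝ) / 5)
def G5 (p τ : ℝ) : ℝ := (1 / 5) * (1 + τ) ^ (-(1 : ℝ))
def G7 (p τ : ℝ) : ℝ := -(1 / 50) * p ^ 3 * (1 + τ) ^ (-(7 : ℝ) / 5)

/-- For `p ∈ ℝ` with `p⁵ = −45`, the functions `G₂, G₄, G₅, G₇` above solve the
dynamical system (II) with parameters `y₄ = y₆ = y₈ = y₁₀ = 0` on `(−1,∞)`. -/
theorem statement16 (p : ℝ) (hp : p ^ 5 = -45) :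
    ∀ τ ∈ Set.Ioi (-1 : ℝ),
      HasDerivAt (G2 p) (G2 p τ * G5 p τ - G7 p τ) τ ∧
      HasDerivAt (G4 p) (2 * (G2 p τ * G7 p τ - G4 p τ * G5 p τ)) τ ∧
      HasDerivAt (G5 p)
        ((G5 p τ) ^ 2 + 14 * (G2 p τ) ^ 5 - 28 * (G2 p τ) ^ 3 * G4 p τ
          - 18 * G2 p τ * (G4 p τ) ^ 2) τ ∧
      HasDerivAt (G7 p)
        (-(G5 p τ) * G7 p τ + 21 * (G2 p τ) ^ 6 + 35 * (G2 p τ) ^ 4 * G4 p τ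
          - 21 * (G2 p τ) ^ 2 * (G4 p τ) ^ 2 - 3 * (G4 p τ) ^ 3) τ := by
  intro τ hτ
  have hx : (0:ℝ) < 1 + τ := by
    have : (-1:ℝ) < τ := hτ
    linarith
  have H : ∀ a : ℝ,
      HasDerivAt (fun t : ℝ => (1 + t) ^ a) (a * (1 + τ) ^ (a - 1)) τ := by
    intro a
    have h0 := Real.hasDerivAt_rpow_const (x := 1 + τ) (p := a) (Or.inl hx.ne')
    have h1 := h0.comp τ ((hasDerivAt_id τ).const_add 1)
    simpa [Function.comp_def] using h1
  set u : ℝ := (1 + τ) ^ (-(1:ℝ)/5) with hu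
  have key : ∀ n : ℕ, (1 + τ) ^ (-(n:ℝ)/5) = u ^ n := by
    intro n
    rw [hu, ← Real.rpow_natCast ((1 + τ) ^ (-(1:ℝ)/5)) n, ← Real.rpow_mul hx.le]
    congr 1
    push_cast
    ring
  have k2 : (1 + τ) ^ (-(2:ℝ)/5) = u ^ 2 := by rw [← key 2]; norm_num
  have k4 : (1 + τ) ^ (-(4:ℝ)/5) = u ^ 4 := by rw [← key 4]; norm_num
  have k5 : (1 + τ) ^ (-(1:ℝ)) = u ^ 5 := by rw [← key 5]; norm_num
  have k7 : (1 + τ) ^ (-(7:ℝ)/5) = u ^ 7 := by rw [← key 7]; norm_num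
  have k7' : (1 + τ) ^ (-(2:ℝ)/5 - 1) = u ^ 7 := by rw [← key 7]; norm_num
  have k9 : (1 + τ) ^ (-(4:ℝ)/5 - 1) = u ^ 9 := by rw [← key 9]; norm_num
  have k10 : (1 + τ) ^ (-(1:ℝ) - 1) = u ^ 10 := by rw [← key 10]; norm_num
  have k12 : (1 + τ) ^ (-(7:ℝ)/5 - 1) = u ^ 12 := by rw [← key 12]; norm_num
  refine ⟨?_, ?_, ?_, ?_⟩
  · have h := (H (-(2:ℝ)/5)).const_mul (-(1/30) * p ^ 3)
    convert h using 1
    · rfl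
    · rfl
    · rfl
    simp only [G2, G5, G7, k2, k5, k7, k7']
    ring
  · have h := (H (-(4:ℝ)/5)).const_mul ((3/20) * p)
    convert h using 1
    · rfl
    · rfl
    · rfl
    simp only [G2, G4, G5, G7, k2, k4, k5, k7, k9]
    linear_combination ((1/750) * p * u ^ 9) * hp
  · have h := (H (-(1:ℝ))).const_mul ((1:ℝ)/5)
    convert h using 1
    · rfl
    · rfl
    · rfl
    simp only [G2, G4, G5, k2, k4, k5, k10]
    linear_combination (-u ^ 10 * ((7/12150000) * p ^ 10 - (49/270000) * p ^ 5 - 2/375)) * hp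
  · have h := (H (-(7:ℝ)/5)).const_mul (-(1/50) * p ^ 3)
    convert h using 1
    · rfl
    · rfl
    · rfl
    simp only [G2, G4, G5, G7, k2, k4, k5, k7, k12]
    linear_combination (-p ^ 3 * u ^ 12 * (-(7/243000000) * p ^ 10 - (7/1350000) * p ^ 5 + 91/120000)) * hp

end
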